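/- Among C¹ curves ξ : [0,1] → (0,1) with ξ(0) = x and ξ(1) = y, the infimum of the action ∫_0^1 |ξ'(t)|²/θ(ξ(t)) dt equals (∫_x^y du/√θ(u))², and it is attained by a unique constant-intrinsic-speed geodesic. -/

import Mathlib

open Set

/-- A `C¹` curve in `(0,1)` joining `x` to `y` in unit time. -/
def AdmCurve (x y : ℝ) (ξ : ℝ → ℝ) : Prop :=
  ContDiff ℝ 1 ξ ∧ (∀ t ∈ Icc (0 : ℝ) 1, ξ t ∈ Ioo (0 : ℝ) 1) ∧ ξ 0 = x ∧ ξ 1 = y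

/-- The Shahshahani action of a curve. -/
noncomputable def curveAction (θ : ℝ → ℝ) (ξ : ℝ → ℝ) : ℝ :=
  ∫ t in (0 : ℝ)..1, (deriv ξ t) ^ 2 / θ (ξ t)

open MeasureTheory intervalIntegral

noncomputable def clampF (p q u : ℝ) : ℝ := min q (max p u)

lemma clamp_mem {p q : ℝ} (hpq : p ≤ q) (u : ℝ) : clampF p q u ∈ Icc p q :=
  ⟨le_min hpq (le_max_left _ _), min_le_left _ _⟩

lemma clamp_eq {p q u : ℝ} (h : u ∈ Icc p q) : clampF p q u = u := by
  unfold clampF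
  rw [max_eq_right h.1, min_eq_right h.2]

lemma clamp_cont (p q : ℝ) : Continuous (clampF p q) := by
  unfold clampF; fun_prop

noncomputable def gc (θ : ℝ → ℝ) (p q u : ℝ) : ℝ := (Real.sqrt (θ (clampF p q u)))⁻¹

noncomputable def Fc (θ : ℝ → ℝ) (p q v : ℝ) : ℝ := ∫ u in p..v, gc θ p q u

section Basic
variable {θ : ℝ → ℝ} {p q : ℝ}
  (hθcont : ContinuousOn θ (Icc (0 : ℝ) 1))
  (hθpos : ∀ u ∈ Ioo (0 : ℝ) 1, 0 < θ u)
  (hpq : p ≤ q) (hI : Icc p q ⊆ Ioo (0 : ℝ) 1)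

include hθpos hpq hI in
lemma theta_clamp_pos (u : ℝ) : 0 < θ (clampF p q u) :=
  hθpos _ (hI (clamp_mem hpq u))

include hθpos hpq hI in
lemma gc_pos (u : ℝ) : 0 < gc θ p q u :=
  inv_pos.2 (Real.sqrt_pos.2 (theta_clamp_pos hθpos hpq hI u))

include hθcont hθpos hpq hI in
lemma gc_cont : Continuous (gc θ p q) := by
  have hc : Continuous fun u => θ (clampF p q u) := by
    rw [continuous_iff_continuousAt]
    intro u
    have hmem : clampF p q u ∈ Ioo (0:ℝ) 1 := hI (clamp_mem hpq u)
    exact (hθcont.continuousAt (Icc_mem_nhds hmem.1 hmem.2)).comp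
      (clamp_cont p q).continuousAt
  exact (hc.sqrt).inv₀ fun u =>
    ne_of_gt (Real.sqrt_pos.2 (theta_clamp_pos hθpos hpq hI u))

lemma gc_eq {u : ℝ} (h : u ∈ Icc p q) : gc θ p q u = (Real.sqrt (θ u))⁻¹ := by
  unfold gc; rw [clamp_eq h]

include hθcont hθpos hpq hI in
lemma Fc_hasDerivAt (v : ℝ) : HasDerivAt (Fc θ p q) (gc θ p q v) v := by
  have hc := gc_cont hθcont hθpos hpq hI
  exact intervalIntegral.integral_hasDerivAt_right (hc.intervalIntegrable _ _)
    (hc.stronglyMeasurableAtFilter _ _) hc.continuousAt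

include hθcont hθpos hpq hI in
lemma Fc_strictMono : StrictMono (Fc θ p q) := by
  apply strictMono_of_deriv_pos
  intro v
  rw [(Fc_hasDerivAt hθcont hθpos hpq hI v).deriv]
  exact gc_pos hθpos hpq hI v

include hθcont hθpos hpq hI in
lemma Fc_sub (a b : ℝ) : Fc θ p q b - Fc θ p q a = ∫ u in a..b, gc θ p q u := by
  have hc := gc_cont hθcont hθpos hpq hI
  unfold Fc
  exact intervalIntegral.integral_interval_sub_left
    (hc.intervalIntegrable (μ := volume) p b) (hc.intervalIntegrable p a)

include hθcont hθpos hpq hI in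
lemma Fc_sub_eq {a b : ℝ} (h : uIcc a b ⊆ Icc p q) :
    Fc θ p q b - Fc θ p q a = ∫ u in a..b, 1 / Real.sqrt (θ u) := by
  rw [Fc_sub hθcont hθpos hpq hI]
  apply intervalIntegral.integral_congr
  intro u hu
  simp only [gc_eq (h hu), one_div]

end Basic
section Geo
variable {θ : ℝ → ℝ} {x y : ℝ}
  (hθcont : ContinuousOn θ (Icc (0 : ℝ) 1))
  (hθpos : ∀ u ∈ Ioo (0 : ℝ) 1, 0 < θ u)
  (hx : x ∈ Ioo (0 : ℝ) 1) (hy : y ∈ Ioo (0 : ℝ) 1)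

include hθcont hθpos hx hy in
set_option maxHeartbeats 2000000 in
lemma geodesic_spec :
    ∃ ξ : ℝ → ℝ, AdmCurve x y ξ ∧
      ∀ t ∈ Icc (0 : ℝ) 1, ξ t ∈ uIcc x y ∧
        deriv ξ t = (∫ u in x..y, 1 / Real.sqrt (θ u)) * Real.sqrt (θ (ξ t)) ∧
        Fc θ (min x y) (max x y) (ξ t) =
          Fc θ (min x y) (max x y) x + (∫ u in x..y, 1 / Real.sqrt (θ u)) * t := by
  set L : ℝ := ∫ u in x..y, 1 / Real.sqrt (θ u) with hLdef
  set p : ℝ := min x y with hp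
  set q : ℝ := max x y with hq
  have hpq : p ≤ q := min_le_max
  have hI : Icc p q ⊆ Ioo (0 : ℝ) 1 := by
    intro u hu
    constructor
    · exact lt_of_lt_of_le (lt_min hx.1 hy.1) hu.1
    · exact lt_of_le_of_lt hu.2 (max_lt hx.2 hy.2)
  have hxy_sub : uIcc x y ⊆ Icc p q := by rw [uIcc]
  have hxIcc : x ∈ Icc p q := hxy_sub left_mem_uIcc
  have hyIcc : y ∈ Icc p q := hxy_sub right_mem_uIcc
  have hgc := gc_cont hθcont hθpos hpq hI
  have hmono := Fc_strictMono hθcont hθpos hpq hI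
  have hFcdiff : Differentiable ℝ (Fc θ p q) :=
    fun v => (Fc_hasDerivAt hθcont hθpos hpq hI v).differentiableAt
  have hFccont : Continuous (Fc θ p q) := hFcdiff.continuous
  -- surjectivity
  obtain ⟨u0, hu0, hmin⟩ := isCompact_Icc.exists_isMinOn (⟨p, le_refl p, hpq⟩ :
      (Icc p q).Nonempty) hgc.continuousOn
  set m : ℝ := gc θ p q u0 with hmdef
  have hm : 0 < m := gc_pos hθpos hpq hI u0
  have hbound : ∀ u, m ≤ gc θ p q u := by
    intro u
    have h1 : gc θ p q u = gc θ p q (clampF p q u) := by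
      unfold gc; rw [clamp_eq (clamp_mem hpq u)]
    rw [h1]; exact hmin (clamp_mem hpq u)
  have hup : ∀ v, p ≤ v → m * (v - p) ≤ Fc θ p q v := by
    intro v hv
    have h1 : m * (v - p) = ∫ _ in p..v, m := by
      rw [intervalIntegral.integral_const]; simp [mul_comm]
    rw [h1]
    exact intervalIntegral.integral_mono_on hv (intervalIntegrable_const)
      (hgc.intervalIntegrable _ _) (fun u _ => hbound u)
  have hdown : ∀ v, v ≤ p → Fc θ p q v ≤ m * (v - p) := by
    intro v hv
    have h1 : m * (p - v) = ∫ _ in v..p, m := by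
      rw [intervalIntegral.integral_const]; simp [mul_comm]
    have h2 : m * (p - v) ≤ ∫ u in v..p, gc θ p q u := by
      rw [h1]
      exact intervalIntegral.integral_mono_on hv (intervalIntegrable_const)
        (hgc.intervalIntegrable _ _) (fun u _ => hbound u)
    have h3 : Fc θ p q v = -∫ u in v..p, gc θ p q u := by
      unfold Fc; rw [intervalIntegral.integral_symm]
    rw [h3]; linarith
  have htop : Filter.Tendsto (Fc θ p q) Filter.atTop Filter.atTop := by
    apply Filter.tendsto_atTop_mono' _ (Filter.eventually_atTop.2 ⟨p, hup⟩)
    have : Filter.Tendsto (fun v : ℝ => m * v + -(m * p)) Filter.atTop Filter.atTop :=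
      Filter.tendsto_atTop_add_const_right _ _ (Filter.Tendsto.const_mul_atTop hm Filter.tendsto_id)
    exact this.congr (fun v => by ring)
  have hbot : Filter.Tendsto (Fc θ p q) Filter.atBot Filter.atBot := by
    apply Filter.tendsto_atBot_mono' _ (Filter.eventually_atBot.2 ⟨p, hdown⟩)
    have : Filter.Tendsto (fun v : ℝ => m * v + -(m * p)) Filter.atBot Filter.atBot :=
      Filter.tendsto_atBot_add_const_right _ _ (Filter.Tendsto.const_mul_atBot hm Filter.tendsto_id)
    exact this.congr (fun v => by ring)
  have hsurj : Function.Surjective (Fc θ p q) := hFccont.surjective htop hbot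
  obtain ⟨E, hEapp⟩ : ∃ E : ℝ ≃o ℝ, ∀ v, E v = Fc θ p q v :=
    ⟨StrictMono.orderIsoOfSurjective _ hmono hsurj, fun v => rfl⟩
  have hleft : ∀ w, Fc θ p q (E.symm w) = w := fun w => by
    rw [← hEapp]; exact E.apply_symm_apply w
  have hEs : ∀ v, E.symm (Fc θ p q v) = v := fun v => by
    rw [← hEapp]; exact E.symm_apply_apply v
  have hEsx : E.symm (Fc θ p q x) = x := hEs x
  have hEsy : E.symm (Fc θ p q y) = y := hEs y
  have hFinv' : ∀ w, HasDerivAt (⇑E.symm) (gc θ p q (E.symm w))⁻¹ w := by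
    intro w
    exact HasDerivAt.of_local_left_inverse (E.symm.continuous.continuousAt)
      (Fc_hasDerivAt hθcont hθpos hpq hI (E.symm w))
      (ne_of_gt (gc_pos hθpos hpq hI _))
      (Filter.Eventually.of_forall hleft)
  set ξ : ℝ → ℝ := fun t => E.symm (Fc θ p q x + L * t) with hξdef
  have hL : Fc θ p q y = Fc θ p q x + L := by
    have := Fc_sub_eq hθcont hθpos hpq hI hxy_sub
    linarith
  have hinner : ∀ t : ℝ, HasDerivAt (fun t : ℝ => Fc θ p q x + L * t) L t := by
    intro t
    simpa using ((hasDerivAt_id t).const_mul L).const_add (Fc θ p q x)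
  have hξdiff : ∀ t, HasDerivAt ξ ((gc θ p q (ξ t))⁻¹ * L) t := by
    intro t
    exact (hFinv' (Fc θ p q x + L * t)).comp t (hinner t)
  have hderiv : deriv ξ = fun t => (gc θ p q (ξ t))⁻¹ * L := funext fun t => (hξdiff t).deriv
  have hξcont : Continuous ξ := E.symm.continuous.comp (by continuity)
  have hξCD : ContDiff ℝ 1 ξ := by
    rw [contDiff_one_iff_deriv]
    refine ⟨fun t => (hξdiff t).differentiableAt, ?_⟩
    rw [hderiv]
    exact ((hgc.comp hξcont).inv₀ (fun t => ne_of_gt (gc_pos hθpos hpq hI _))).mul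
      continuous_const
  have hξ0 : ξ 0 = x := by simp [hξdef, hEsx]
  have hξ1 : ξ 1 = y := by simp [hξdef, ← hL, hEsy]
  have hrange : ∀ t ∈ Icc (0:ℝ) 1, ξ t ∈ uIcc x y := by
    intro t ht
    have harg : Fc θ p q x + L * t ∈ uIcc (Fc θ p q x) (Fc θ p q y) := by
      rw [hL]
      rcases le_total 0 L with h | h
      · have h0 : 0 ≤ L * t := mul_nonneg h ht.1
        have h1 : L * t ≤ L := mul_le_of_le_one_right h ht.2
        rw [uIcc_of_le (by linarith : Fc θ p q x ≤ Fc θ p q x + L)]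
        exact ⟨by linarith, by linarith⟩
      · have h0 : L * t ≤ 0 := mul_nonpos_iff.2 (Or.inr ⟨h, ht.1⟩)
        have h1 : L * 1 ≤ L * t := mul_le_mul_of_nonpos_left ht.2 h
        rw [uIcc_of_ge (by linarith : Fc θ p q x + L ≤ Fc θ p q x)]
        exact ⟨by linarith, by linarith⟩
    have ha1 : Fc θ p q (min x y) ≤ Fc θ p q x + L * t := by
      rw [hmono.monotone.map_min]; exact harg.1
    have ha2 : Fc θ p q x + L * t ≤ Fc θ p q (max x y) := by
      rw [hmono.monotone.map_max]; exact harg.2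
    have h1 := E.symm.monotone ha1
    have h2 := E.symm.monotone ha2
    rw [hEs] at h1 h2
    exact ⟨h1, h2⟩
  refine ⟨ξ, ⟨hξCD, fun t ht => hI (hxy_sub (hrange t ht)), hξ0, hξ1⟩, ?_⟩
  intro t ht
  refine ⟨hrange t ht, ?_, ?_⟩
  · rw [congrFun hderiv t, gc_eq (hxy_sub (hrange t ht)), inv_inv, mul_comm]
  · exact hleft _
end Geo
section LB
variable {θ : ℝ → ℝ}
  (hθcont : ContinuousOn θ (Icc (0 : ℝ) 1))
  (hθpos : ∀ u ∈ Ioo (0 : ℝ) 1, 0 < θ u)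

include hθcont hθpos in
lemma curve_facts {x y : ℝ} {ξ : ℝ → ℝ} (hξ : AdmCurve x y ξ) :
    ∃ p q : ℝ, p ≤ q ∧ Icc p q ⊆ Ioo (0:ℝ) 1 ∧ (∀ t ∈ Icc (0:ℝ) 1, ξ t ∈ Icc p q) ∧
      uIcc x y ⊆ Icc p q ∧
      (∀ t ∈ Icc (0:ℝ) 1,
        HasDerivAt (fun s => Fc θ p q (ξ s)) (deriv ξ t / Real.sqrt (θ (ξ t))) t) := by
  obtain ⟨hCD, hmem, h0, h1⟩ := hξ
  have hcont := hCD.continuous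
  have hK : IsCompact (ξ '' Icc 0 1) := isCompact_Icc.image hcont
  have hne : (ξ '' Icc 0 1).Nonempty := ⟨ξ 0, 0, ⟨le_refl 0, zero_le_one⟩, rfl⟩
  set p := sInf (ξ '' Icc 0 1) with hpdef
  set q := sSup (ξ '' Icc 0 1) with hqdef
  have hpmem : p ∈ ξ '' Icc 0 1 := hK.sInf_mem hne
  have hqmem : q ∈ ξ '' Icc 0 1 := hK.sSup_mem hne
  have hsub : ∀ t ∈ Icc (0:ℝ) 1, ξ t ∈ Icc p q := fun t ht =>
    ⟨csInf_le hK.bddBelow ⟨t, ht, rfl⟩, le_csSup hK.bddAbove ⟨t, ht, rfl⟩⟩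
  have hpq : p ≤ q := by
    have := hsub 0 ⟨le_refl 0, zero_le_one⟩
    exact le_trans this.1 this.2
  have hI : Icc p q ⊆ Ioo (0:ℝ) 1 := by
    obtain ⟨tp, htp, hep⟩ := hpmem
    obtain ⟨tq, htq, heq⟩ := hqmem
    have hp1 : p ∈ Ioo (0:ℝ) 1 := hep ▸ hmem tp htp
    have hq1 : q ∈ Ioo (0:ℝ) 1 := heq ▸ hmem tq htq
    intro u hu
    exact ⟨lt_of_lt_of_le hp1.1 hu.1, lt_of_le_of_lt hu.2 hq1.2⟩
  have hxmem : x ∈ Icc p q := h0 ▸ hsub 0 ⟨le_refl 0, zero_le_one⟩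
  have hymem : y ∈ Icc p q := h1 ▸ hsub 1 ⟨zero_le_one, le_refl 1⟩
  have hxy : uIcc x y ⊆ Icc p q := by
    rw [← uIcc_of_le hpq]
    exact uIcc_subset_uIcc ((uIcc_of_le hpq).symm ▸ hxmem) ((uIcc_of_le hpq).symm ▸ hymem)
  refine ⟨p, q, hpq, hI, hsub, hxy, ?_⟩
  intro t ht
  have hd : HasDerivAt ξ (deriv ξ t) t := (hCD.differentiable one_ne_zero t).hasDerivAt
  have hcomp := (Fc_hasDerivAt hθcont hθpos hpq hI (ξ t)).comp t hd
  have : gc θ p q (ξ t) * deriv ξ t = deriv ξ t / Real.sqrt (θ (ξ t)) := by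
    rw [gc_eq (hsub t ht), div_eq_mul_inv, mul_comm]
  exact this ▸ hcomp

include hθcont hθpos in
lemma action_lb {x y : ℝ} {ξ : ℝ → ℝ} (hξ : AdmCurve x y ξ) :
    (∫ u in x..y, 1 / Real.sqrt (θ u)) ^ 2 ≤ curveAction θ ξ := by
  obtain ⟨p, q, hpq, hI, hmem, hxy, hchain⟩ := curve_facts hθcont hθpos hξ
  set L : ℝ := ∫ u in x..y, 1 / Real.sqrt (θ u) with hLdef
  set f : ℝ → ℝ := fun t => deriv ξ t / Real.sqrt (θ (ξ t)) with hfdef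
  have h01 : uIcc (0:ℝ) 1 = Icc 0 1 := uIcc_of_le zero_le_one
  have hθξ : ContinuousOn (fun t => θ (ξ t)) (Icc (0:ℝ) 1) := by
    intro t ht
    have hm := hξ.2.1 t ht
    exact ((hθcont.continuousAt (Icc_mem_nhds hm.1 hm.2)).comp
      hξ.1.continuous.continuousAt).continuousWithinAt
  have hθξpos : ∀ t ∈ Icc (0:ℝ) 1, 0 < θ (ξ t) := fun t ht => hθpos _ (hξ.2.1 t ht)
  have hfc : ContinuousOn f (Icc (0:ℝ) 1) := by
    apply ContinuousOn.div ((hξ.1.continuous_deriv le_rfl).continuousOn) hθξ.sqrt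
    intro t ht
    exact ne_of_gt (Real.sqrt_pos.2 (hθξpos t ht))
  have hfi : IntervalIntegrable f MeasureTheory.volume 0 1 :=
    (h01 ▸ hfc).intervalIntegrable
  have hf2i : IntervalIntegrable (fun t => (f t)^2) MeasureTheory.volume 0 1 :=
    (h01 ▸ (hfc.pow 2)).intervalIntegrable
  have hint : ∫ t in (0:ℝ)..1, f t = L := by
    rw [intervalIntegral.integral_eq_sub_of_hasDerivAt
      (fun t ht => hchain t (h01 ▸ ht)) hfi, hξ.2.2.1, hξ.2.2.2]
    exact Fc_sub_eq hθcont hθpos hpq hI hxy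
  have hsq : ∀ t ∈ Icc (0:ℝ) 1, (f t)^2 = (deriv ξ t)^2 / θ (ξ t) := by
    intro t ht
    rw [hfdef]
    simp only
    rw [div_pow, Real.sq_sqrt (hθξpos t ht).le]
  have hact : curveAction θ ξ = ∫ t in (0:ℝ)..1, (f t)^2 := by
    unfold curveAction
    exact (intervalIntegral.integral_congr (fun t ht => hsq t (h01 ▸ ht))).symm
  have hnn : 0 ≤ ∫ t in (0:ℝ)..1, (f t - L)^2 :=
    intervalIntegral.integral_nonneg zero_le_one (fun u _ => sq_nonneg _)
  have hexp : ∫ t in (0:ℝ)..1, (f t - L)^2 =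
      (∫ t in (0:ℝ)..1, (f t)^2) - 2*L*(∫ t in (0:ℝ)..1, f t) + L^2 := by
    have he : ∀ t ∈ uIcc (0:ℝ) 1, (f t - L)^2 = ((f t)^2 - (2*L) * f t) + L^2 :=
      fun t _ => by ring
    rw [intervalIntegral.integral_congr he,
      intervalIntegral.integral_add (hf2i.sub (hfi.const_mul (2*L)))
        intervalIntegrable_const,
      intervalIntegral.integral_sub hf2i (hfi.const_mul (2*L)),
      intervalIntegral.integral_const_mul, intervalIntegral.integral_const]
    simp
  rw [hint] at hexp
  rw [hact]
  nlinarith [hnn, hexp]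
end LB
section Uniq
variable {θ : ℝ → ℝ}
  (hθcont : ContinuousOn θ (Icc (0 : ℝ) 1))
  (hθpos : ∀ u ∈ Ioo (0 : ℝ) 1, 0 < θ u)

include hθcont hθpos in
lemma char_min {x y : ℝ} {ξ : ℝ → ℝ} (hξ : AdmCurve x y ξ)
    (hspeed : ∀ t ∈ Icc (0:ℝ) 1,
      (deriv ξ t) ^ 2 / θ (ξ t) = (∫ u in x..y, 1 / Real.sqrt (θ u)) ^ 2) :
    ∀ t ∈ Icc (0:ℝ) 1,
      Fc θ (min x y) (max x y) (ξ t) =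
        Fc θ (min x y) (max x y) x + (∫ u in x..y, 1 / Real.sqrt (θ u)) * t := by
  set L : ℝ := ∫ u in x..y, 1 / Real.sqrt (θ u) with hLdef
  obtain ⟨p', q', hpq', hI', hmem', hxy', hchain'⟩ := curve_facts hθcont hθpos hξ
  set f : ℝ → ℝ := fun t => deriv ξ t / Real.sqrt (θ (ξ t)) with hfdef
  have h01 : uIcc (0:ℝ) 1 = Icc 0 1 := uIcc_of_le zero_le_one
  have hθξpos : ∀ t ∈ Icc (0:ℝ) 1, 0 < θ (ξ t) := fun t ht => hθpos _ (hξ.2.1 t ht)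
  have hsq : ∀ t ∈ Icc (0:ℝ) 1, (f t)^2 = L^2 := by
    intro t ht
    rw [hfdef]
    simp only
    rw [div_pow, Real.sq_sqrt (hθξpos t ht).le]
    exact hspeed t ht
  have hval : ∀ t ∈ Icc (0:ℝ) 1, f t = L ∨ f t = -L := by
    intro t ht
    have := hsq t ht
    rw [pow_two, pow_two] at this
    exact mul_self_eq_mul_self_iff.1 this
  rcases eq_or_ne L 0 with hL0 | hL0
  · -- L = 0 : the curve is constant
    have hd0 : ∀ t ∈ Icc (0:ℝ) 1, deriv ξ t = 0 := by
      intro t ht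
      have h := hval t ht
      rw [hL0] at h
      have hf0 : f t = 0 := by rcases h with h | h <;> simpa using h
      rw [hfdef] at hf0
      simp only at hf0
      rcases div_eq_zero_iff.1 hf0 with h | h
      · exact h
      · exact absurd h (ne_of_gt (Real.sqrt_pos.2 (hθξpos t ht)))
    have hconst : ∀ t ∈ Icc (0:ℝ) 1, ξ t = x := by
      intro t ht
      have hsub01 : uIcc (0:ℝ) t ⊆ Icc 0 1 := by
        rw [uIcc_of_le ht.1]
        exact Icc_subset_Icc (le_refl _) ht.2
      have hFTC : ∫ s in (0:ℝ)..t, deriv ξ s = ξ t - ξ 0 :=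
        intervalIntegral.integral_eq_sub_of_hasDerivAt
          (fun s hs => (hξ.1.differentiable one_ne_zero s).hasDerivAt)
          (((hξ.1.continuous_deriv le_rfl).continuousOn).intervalIntegrable)
      have hz : ∫ s in (0:ℝ)..t, deriv ξ s = 0 := by
        rw [intervalIntegral.integral_congr (g := fun _ => (0:ℝ))
          (fun s hs => hd0 s (hsub01 hs))]
        simp
      rw [hz] at hFTC
      have h' : ξ t = ξ 0 := sub_eq_zero.1 hFTC.symm
      rw [h', hξ.2.2.1]
    intro t ht
    rw [hconst t ht, hL0]
    ring
  · -- L ≠ 0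
    have hfc : ContinuousOn f (Icc (0:ℝ) 1) := by
      apply ContinuousOn.div ((hξ.1.continuous_deriv le_rfl).continuousOn) ?_ ?_
      · intro t ht
        have hm := hξ.2.1 t ht
        exact (((hθcont.continuousAt (Icc_mem_nhds hm.1 hm.2)).comp
          hξ.1.continuous.continuousAt).continuousWithinAt).sqrt
      · intro t ht
        exact ne_of_gt (Real.sqrt_pos.2 (hθξpos t ht))
    have hfi : IntervalIntegrable f MeasureTheory.volume 0 1 :=
      (h01 ▸ hfc).intervalIntegrable
    have hint : ∫ t in (0:ℝ)..1, f t = L := by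
      rw [intervalIntegral.integral_eq_sub_of_hasDerivAt
        (fun t ht => hchain' t (h01 ▸ ht)) hfi, hξ.2.2.1, hξ.2.2.2]
      exact Fc_sub_eq hθcont hθpos hpq' hI' hxy'
    -- f is constant equal to L on [0,1]
    have hconst : ∀ t ∈ Icc (0:ℝ) 1, f t = L := by
      by_cases hall : ∀ t ∈ Icc (0:ℝ) 1, f t = L
      · exact hall
      · exfalso
        push_neg at hall
        obtain ⟨t2, ht2, hft2⟩ := hall
        have hft2' : f t2 = -L := (hval t2 ht2).resolve_left hft2
        have hallneg : ∀ t ∈ Icc (0:ℝ) 1, f t = -L := by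
          intro t ht
          rcases hval t ht with h | h
          · exfalso
            have hsub : uIcc t t2 ⊆ Icc (0:ℝ) 1 := by
              rw [← uIcc_of_le (zero_le_one : (0:ℝ) ≤ 1)]
              exact uIcc_subset_uIcc (h01 ▸ ht) (h01 ▸ ht2)
            have hivt := intermediate_value_uIcc (hfc.mono hsub)
            have h0mem : (0:ℝ) ∈ uIcc (f t) (f t2) := by
              rw [h, hft2']
              rcases le_or_gt 0 L with hL | hL
              · rw [uIcc_of_ge (by linarith : -L ≤ L)]
                exact ⟨by linarith, by linarith⟩
              · rw [uIcc_of_le (by linarith : L ≤ -L)]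
                exact ⟨by linarith, by linarith⟩
            obtain ⟨s, hs, hfs⟩ := hivt h0mem
            rcases hval s (hsub hs) with h' | h' <;> rw [hfs] at h'
            · exact hL0 h'.symm
            · exact hL0 (by linarith)
          · exact h
        have : ∫ t in (0:ℝ)..1, f t = -L := by
          rw [intervalIntegral.integral_congr (g := fun _ => -L)
            (fun s hs => hallneg s (h01 ▸ hs))]
          simp
        rw [hint] at this
        exact hL0 (by linarith)
    -- conclude
    intro t ht
    have hsub01 : uIcc (0:ℝ) t ⊆ Icc 0 1 := by
      rw [uIcc_of_le ht.1]
      exact Icc_subset_Icc (le_refl _) ht.2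
    have hFTC : ∫ s in (0:ℝ)..t, f s = Fc θ p' q' (ξ t) - Fc θ p' q' (ξ 0) :=
      intervalIntegral.integral_eq_sub_of_hasDerivAt
        (fun s hs => hchain' s (hsub01 hs))
        ((hfc.mono hsub01).intervalIntegrable)
    have hLt : ∫ s in (0:ℝ)..t, f s = L * t := by
      rw [intervalIntegral.integral_congr (g := fun _ => L)
        (fun s hs => hconst s (hsub01 hs))]
      simp [mul_comm]
    have hkey : Fc θ p' q' (ξ t) = Fc θ p' q' x + L * t := by
      rw [← hξ.2.2.1]; linarith [hFTC, hLt, hFTC ▸ hLt]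
    -- ξ t stays in uIcc x y
    have hFy : Fc θ p' q' y = Fc θ p' q' x + L := by
      have := Fc_sub_eq hθcont hθpos hpq' hI' hxy'
      linarith
    have hmono' := Fc_strictMono hθcont hθpos hpq' hI'
    have hrange : ξ t ∈ uIcc x y := by
      have harg1 : Fc θ p' q' (min x y) ≤ Fc θ p' q' (ξ t) := by
        rw [hmono'.monotone.map_min, hkey]
        rcases le_total 0 L with h | h
        · have h0 : 0 ≤ L * t := mul_nonneg h ht.1
          exact le_trans (min_le_left _ _) (by linarith)
        · have h1 : L * 1 ≤ L * t := mul_le_mul_of_nonpos_left ht.2 h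
          exact le_trans (min_le_right _ _) (by rw [hFy]; linarith)
      have harg2 : Fc θ p' q' (ξ t) ≤ Fc θ p' q' (max x y) := by
        rw [hmono'.monotone.map_max, hkey]
        rcases le_total 0 L with h | h
        · have h1 : L * t ≤ L := mul_le_of_le_one_right h ht.2
          exact le_trans (by rw [hFy]; linarith) (le_max_right _ _)
        · have h0 : L * t ≤ 0 := mul_nonpos_iff.2 (Or.inr ⟨h, ht.1⟩)
          exact le_trans (by linarith) (le_max_left _ _)
      exact ⟨(hmono'.le_iff_le).1 harg1, (hmono'.le_iff_le).1 harg2⟩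
    -- transfer to the (min x y, max x y) window
    have hpq : min x y ≤ max x y := min_le_max
    have hI : Icc (min x y) (max x y) ⊆ Ioo (0:ℝ) 1 := by
      have h1 : x ∈ Icc p' q' := hxy' left_mem_uIcc
      intro u hu
      have hxI : min x y ∈ uIcc x y := by rw [uIcc]; exact ⟨le_refl _, hpq⟩
      have hyI : max x y ∈ uIcc x y := by rw [uIcc]; exact ⟨hpq, le_refl _⟩
      exact ⟨lt_of_lt_of_le (hI' (hxy' hxI)).1 hu.1, lt_of_le_of_lt hu.2 (hI' (hxy' hyI)).2⟩
    have hxu : uIcc x (ξ t) ⊆ uIcc x y := uIcc_subset_uIcc left_mem_uIcc hrange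
    have hqq : uIcc x y ⊆ Icc (min x y) (max x y) := by rw [uIcc]
    have e1 : Fc θ (min x y) (max x y) (ξ t) - Fc θ (min x y) (max x y) x
        = ∫ u in x..(ξ t), 1 / Real.sqrt (θ u) :=
      Fc_sub_eq hθcont hθpos hpq hI (hxu.trans hqq)
    have e2 : Fc θ p' q' (ξ t) - Fc θ p' q' x = ∫ u in x..(ξ t), 1 / Real.sqrt (θ u) :=
      Fc_sub_eq hθcont hθpos hpq' hI' (hxu.trans hxy')
    rw [hkey] at e2
    linarith [e1, e2]
end Uniq

theorem stmt15 (θ : ℝ → ℝ)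
    (hθcont : ContinuousOn θ (Icc (0 : ℝ) 1))
    (hθpos : ∀ u ∈ Ioo (0 : ℝ) 1, 0 < θ u)
    (x y : ℝ) (hx : x ∈ Ioo (0 : ℝ) 1) (hy : y ∈ Ioo (0 : ℝ) 1) :
    -- the infimum of the action equals `(∫_x^y du/√θ(u))²` ...
    sInf {a : ℝ | ∃ ξ, AdmCurve x y ξ ∧ curveAction θ ξ = a} =
      (∫ u in x..y, 1 / Real.sqrt (θ u)) ^ 2 ∧
    -- ... and it is attained by a constant-intrinsic-speed geodesic, unique
    -- among constant-speed minimisers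
    ∃ ξ, AdmCurve x y ξ ∧
      curveAction θ ξ = (∫ u in x..y, 1 / Real.sqrt (θ u)) ^ 2 ∧
      (∀ t ∈ Icc (0 : ℝ) 1,
        (deriv ξ t) ^ 2 / θ (ξ t) = (∫ u in x..y, 1 / Real.sqrt (θ u)) ^ 2) ∧
      ∀ ξ', AdmCurve x y ξ' →
        curveAction θ ξ' = (∫ u in x..y, 1 / Real.sqrt (θ u)) ^ 2 →
        (∀ t ∈ Icc (0 : ℝ) 1,
          (deriv ξ' t) ^ 2 / θ (ξ' t) = (∫ u in x..y, 1 / Real.sqrt (θ u)) ^ 2) →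
        Set.EqOn ξ' ξ (Icc (0 : ℝ) 1) := by
  set L : ℝ := ∫ u in x..y, 1 / Real.sqrt (θ u) with hLdef
  have h01 : uIcc (0:ℝ) 1 = Icc 0 1 := uIcc_of_le zero_le_one
  obtain ⟨ξ, hAdm, hspec⟩ := geodesic_spec hθcont hθpos hx hy
  have hIoo : uIcc x y ⊆ Ioo (0:ℝ) 1 := by
    rw [uIcc]
    intro u hu
    exact ⟨lt_of_lt_of_le (lt_min hx.1 hy.1) hu.1, lt_of_le_of_lt hu.2 (max_lt hx.2 hy.2)⟩
  have hspeed : ∀ t ∈ Icc (0:ℝ) 1, (deriv ξ t)^2 / θ (ξ t) = L^2 := by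
    intro t ht
    obtain ⟨hr, hd, _⟩ := hspec t ht
    have hθt : 0 < θ (ξ t) := hθpos _ (hIoo hr)
    rw [hd, mul_pow, Real.sq_sqrt hθt.le, mul_div_assoc, div_self (ne_of_gt hθt), mul_one]
  have hact : curveAction θ ξ = L^2 := by
    unfold curveAction
    rw [intervalIntegral.integral_congr (g := fun _ => L^2)
      (fun t ht => hspeed t (h01 ▸ ht))]
    simp
  have hmemS : L^2 ∈ {a : ℝ | ∃ ξ, AdmCurve x y ξ ∧ curveAction θ ξ = a} :=
    ⟨ξ, hAdm, hact⟩
  have hlb : ∀ a ∈ {a : ℝ | ∃ ξ, AdmCurve x y ξ ∧ curveAction θ ξ = a}, L^2 ≤ a := by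
    rintro a ⟨ξ', hξ', rfl⟩
    exact action_lb hθcont hθpos hξ'
  refine ⟨le_antisymm (csInf_le ⟨L^2, hlb⟩ hmemS) (le_csInf ⟨L^2, hmemS⟩ hlb),
    ξ, hAdm, hact, hspeed, ?_⟩
  intro ξ' hξ' _ hspeed' t ht
  have hpq : min x y ≤ max x y := min_le_max
  have hI : Icc (min x y) (max x y) ⊆ Ioo (0:ℝ) 1 := by
    rw [← uIcc]; exact hIoo
  have h1 := char_min hθcont hθpos hξ' hspeed' t ht
  have h2 := (hspec t ht).2.2
  exact (Fc_strictMono hθcont hθpos hpq hI).injective (h1.trans h2.symm)
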